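/- Let p and q be distinct primes, both congruent to 2 modulo 3, and let N = p·q. Then there exists a natural number d such that for every y in ZMod N (the integers modulo N), (y³)^d = y; that is, x ↦ x^d is a (left and, by bijectivity of cubing, two-sided) inverse of the cube map on ZMod N. -/

import Mathlib

lemma pow_aux_stmt9 {p : ℕ} [Fact p.Prime] (a : ZMod p) (k : ℕ) :
    a ^ (1 + (p - 1) * k) = a := by
  rcases eq_or_ne a 0 with h | h
  · rw [pow_add, pow_one, h, zero_mul]
  · rw [pow_add, pow_one, pow_mul, ZMod.pow_card_sub_one_eq_one h, one_pow, mul_one]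

theorem stmt_9 (p q : ℕ) (hp : p.Prime) (hq : q.Prime) (hpq : p ≠ q)
    (hp3 : p % 3 = 2) (hq3 : q % 3 = 2) (N : ℕ) (hN : N = p * q) :
    ∃ d : ℕ, ∀ y : ZMod N, (y ^ 3) ^ d = y := by
  subst hN
  haveI : Fact p.Prime := ⟨hp⟩
  haveI : Fact q.Prime := ⟨hq⟩
  have hp2 : 2 ≤ p := hp.two_le
  have hq2 : 2 ≤ q := hq.two_le
  set m := (p - 1) * (q - 1) with hm
  have hcop : Nat.Coprime 3 m := by
    apply Nat.Coprime.mul_right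
    · rw [Nat.Prime.coprime_iff_not_dvd Nat.prime_three]
      omega
    · rw [Nat.Prime.coprime_iff_not_dvd Nat.prime_three]
      omega
  have hm1 : 1 < m := by
    rw [hm, Nat.one_lt_mul_iff]
    omega
  obtain ⟨d, -, hd⟩ := Nat.exists_mul_mod_eq_one_of_coprime hcop hm1
  set k := 3 * d / m with hk
  have h3d : 3 * d = m * k + 1 := by
    rw [← hd, hk]
    exact (Nat.div_add_mod _ _).symm
  have hcpq : Nat.Coprime p q := (Nat.coprime_primes hp hq).mpr hpq
  refine ⟨d, fun y => ?_⟩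
  have e := ZMod.chineseRemainder hcpq
  apply e.injective
  rw [← pow_mul, h3d, map_pow]
  apply Prod.ext
  · rw [Prod.pow_fst]
    have : m * k + 1 = 1 + (p - 1) * ((q - 1) * k) := by rw [hm]; ring
    rw [this]
    exact pow_aux_stmt9 _ _
  · rw [Prod.pow_snd]
    have : m * k + 1 = 1 + (q - 1) * ((p - 1) * k) := by rw [hm]; ring
    rw [this]
    exact pow_aux_stmt9 _ _
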